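/- For every β ∈ ℂ and every δ ∈ (0,1), there exist a complex polynomial p and a real number δ₀ ∈ (0,1) such that: (1) p(0) = 0 and p(1−δ₀) = β; (2) p(𝔻) ⊆ S_{β,δ}, i.e., for every z in the open unit disc 𝔻, the value p(z) lies within Euclidean distance δ of the segment [0,β]. -/

import Mathlib

set_option maxHeartbeats 1000000


open Metric

lemma aux_tail (N : ℕ) {r : ℝ} (hr0 : 0 ≤ r) (hr1 : r < 1) {z : ℂ} (hz : ‖z‖ ≤ 1) :
    ‖(∑ j ∈ Finset.range (N + 2), ((r : ℂ) ^ j / j) * z ^ j) -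
      Complex.log (1 - (r : ℂ) * z)⁻¹‖ ≤ r ^ (N + 2) * (1 - r) ⁻¹ / (N + 2) := by
  have hrz : ‖(r : ℂ) * z‖ ≤ r := by
    rw [norm_mul, Complex.norm_real, Real.norm_of_nonneg hr0]
    calc r * ‖z‖ ≤ r * 1 := by gcongr
    _ = r := mul_one r
  have hrz1 : ‖(r : ℂ) * z‖ < 1 := lt_of_le_of_lt hrz hr1
  have key := Complex.norm_log_one_sub_inv_add_logTaylor_neg_le (N + 1) hrz1
  have hsum : Complex.logTaylor (N + 2) (-((r : ℂ) * z)) =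
      -∑ j ∈ Finset.range (N + 2), ((r : ℂ) ^ j / j) * z ^ j := by
    rw [Complex.logTaylor, ← Finset.sum_neg_distrib]
    refine Finset.sum_congr rfl fun j _ => ?_
    rw [neg_pow]
    have hj : ((-1 : ℂ)) ^ (j + 1) * (-1) ^ j = -1 := by
      rw [← pow_add]
      exact Odd.neg_one_pow ⟨j, by omega⟩
    linear_combination (((r : ℂ) * z) ^ j / (j : ℂ)) * hj
  rw [hsum] at key
  have h1 : (0:ℝ) < 1 - r := by linarith
  have h2 : (0:ℝ) < 1 - ‖(r : ℂ) * z‖ := by linarith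
  calc ‖(∑ j ∈ Finset.range (N + 2), ((r : ℂ) ^ j / j) * z ^ j) -
        Complex.log (1 - (r : ℂ) * z)⁻¹‖
      = ‖Complex.log (1 - (r : ℂ) * z)⁻¹ +
          -∑ j ∈ Finset.range (N + 2), ((r : ℂ) ^ j / j) * z ^ j‖ := by
        rw [norm_sub_rev, sub_eq_add_neg]
    _ ≤ ‖(r : ℂ) * z‖ ^ (N + 1 + 1) * (1 - ‖(r : ℂ) * z‖)⁻¹ / (↑(N + 1) + 1) := key
    _ ≤ r ^ (N + 2) * (1 - r)⁻¹ / (↑(N + 1) + 1) := by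
        gcongr <;> first | exact norm_nonneg _ | linarith | exact hrz
    _ = r ^ (N + 2) * (1 - r)⁻¹ / (N + 2) := by push_cast; ring

/-- **Polynomial transformation of the unit disc into a strip around a segment.**
For every `β ∈ ℂ` and `δ ∈ (0,1)` there is a polynomial `p` and `δ₀ ∈ (0,1)` such that
`p 0 = 0`, `p (1−δ₀) = β`, and `p` maps the open unit disc into the open `δ`-strip
of the segment `[0,β]`. -/
theorem exists_polynomial_disc_to_strip
    (β : ℂ) (δ : ℝ) (hδ0 : 0 < δ) (hδ1 : δ < 1) :
    ∃ (p : Polynomial ℂ) (δ₀ : ℝ), 0 < δ₀ ∧ δ₀ < 1 ∧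
      p.eval 0 = 0 ∧ p.eval ((1 : ℂ) - δ₀) = β ∧
      ∀ z ∈ ball (0 : ℂ) 1, Metric.infDist (p.eval z) (segment ℝ (0 : ℂ) β) < δ := by
  set B := ‖β‖ with hB
  have hB0 : 0 ≤ B := norm_nonneg β
  set ε := δ / (B + 1) with hε
  have hε0 : 0 < ε := by positivity
  have hε1 : ε ≤ 1 := by
    rw [hε, div_le_one (by linarith)]; linarith
  set M := 6 / ε + 2 with hM
  have h6ε : 6 ≤ 6 / ε := by
    rw [le_div_iff₀ hε0]; nlinarith
  have hM8 : 8 ≤ M := by rw [hM]; linarith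
  set r := 1 - Real.exp (-M) with hrdef
  have hexp0 : 0 < Real.exp (-M) := Real.exp_pos _
  have hexp1 : Real.exp (-M) < 1 := by
    have := Real.exp_lt_exp.mpr (show -M < 0 by linarith)
    simpa using this
  have hr0 : 0 < r := by rw [hrdef]; linarith
  have hr1 : r < 1 := by rw [hrdef]; linarith
  have h1r : 1 - r = Real.exp (-M) := by rw [hrdef]; ring
  have h1r0 : 0 < 1 - r := by linarith
  obtain ⟨N, hN⟩ := exists_pow_lt_of_lt_one h1r0 hr1
  set τ := r ^ (N + 2) * (1 - r)⁻¹ / (N + 2) with hτ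
  have hτ0 : 0 ≤ τ := by positivity
  have hτ1 : τ ≤ 1 := by
    have e1 : τ ≤ r ^ (N + 2) * (1 - r)⁻¹ / 1 := by
      rw [hτ]; gcongr <;> first | positivity | (push_cast; linarith [N.cast_nonneg (α := ℝ)])
    have e2 : r ^ (N + 2) ≤ r ^ N :=
      pow_le_pow_of_le_one hr0.le hr1.le (by omega)
    have e3 : r ^ N * (1 - r)⁻¹ ≤ (1 - r) * (1 - r)⁻¹ := by gcongr <;> exact hN.le
    have e4 : (1 - r) * (1 - r)⁻¹ = 1 := mul_inv_cancel₀ h1r0.ne'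
    rw [div_one] at e1
    have e5 : r ^ (N + 2) * (1 - r)⁻¹ ≤ r ^ N * (1 - r)⁻¹ := by gcongr
    linarith
  -- the normalizing constant
  set c := ∑ j ∈ Finset.range (N + 2), (r ^ j / j) * r ^ j with hc
  have hcq : ((c : ℝ) : ℂ) = ∑ j ∈ Finset.range (N + 2), ((r : ℂ) ^ j / j) * (r : ℂ) ^ j := by
    rw [hc]; push_cast; rfl
  set M₂ := -Real.log (1 - r * r) with hM₂
  have h1rr : 0 < 1 - r * r := by nlinarith
  have hM₂le : M₂ ≤ M := by
    have h1 : Real.log (1 - r) ≤ Real.log (1 - r * r) := by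
      gcongr <;> nlinarith
    rw [h1r, Real.log_exp] at h1
    rw [hM₂]; linarith
  have hM₂ge : M - 1 ≤ M₂ := by
    have h1 : 1 - r * r ≤ 2 * (1 - r) := by nlinarith
    have h2 : Real.log (1 - r * r) ≤ Real.log (2 * (1 - r)) := by
      gcongr
    rw [Real.log_mul two_ne_zero h1r0.ne', h1r, Real.log_exp] at h2
    have h3 : Real.log 2 ≤ 1 := by
      have := Real.log_le_sub_one_of_pos (by norm_num : (0:ℝ) < 2)
      linarith
    rw [hM₂]; linarith
  -- c is close to M₂
  have hcM₂ : |c - M₂| ≤ τ := by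
    have hzr : ‖((r : ℝ) : ℂ)‖ ≤ 1 := by
      rw [Complex.norm_real, Real.norm_of_nonneg hr0.le]; exact hr1.le
    have h := aux_tail N hr0.le hr1 hzr
    have hlog : Complex.log (1 - (r : ℂ) * (r : ℂ))⁻¹ = ((M₂ : ℝ) : ℂ) := by
      have h1 : (1 - (r : ℂ) * (r : ℂ))⁻¹ = (((1 - r * r)⁻¹ : ℝ) : ℂ) := by
        push_cast; ring
      rw [h1, ← Complex.ofReal_log (by positivity : (0:ℝ) ≤ (1 - r * r)⁻¹),
        Real.log_inv, hM₂]
    rw [hlog, ← hcq, ← Complex.ofReal_sub, Complex.norm_real] at h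
    exact h
  have hcabs := abs_le.mp hcM₂
  have hclo : 6 / ε ≤ c := by
    have : M - 2 ≤ c := by linarith
    rw [hM] at this; linarith
  have hc0 : (0:ℝ) < c := lt_of_lt_of_le (by linarith) hclo
  -- the polynomial
  set q : Polynomial ℂ :=
    ∑ j ∈ Finset.range (N + 2), Polynomial.C ((r : ℂ) ^ j / j) * Polynomial.X ^ j with hq
  refine ⟨Polynomial.C (β / c) * q, 1 - r, h1r0, by linarith, ?_, ?_, ?_⟩
  · -- value at 0
    rw [Polynomial.eval_mul, Polynomial.eval_C, hq, Polynomial.eval_finset_sum]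
    have : ∀ j ∈ Finset.range (N + 2),
        (Polynomial.C ((r : ℂ) ^ j / j) * Polynomial.X ^ j).eval 0 = 0 := by
      intro j _
      rcases j with _ | j
      · simp
      · simp
    rw [Finset.sum_eq_zero this, mul_zero]
  · -- value at 1 - δ₀ = r
    have hval : ((1 : ℂ) - ((1 - r : ℝ) : ℂ)) = ((r : ℝ) : ℂ) := by push_cast; ring
    rw [hval, Polynomial.eval_mul, Polynomial.eval_C, hq, Polynomial.eval_finset_sum]
    have hsum : (∑ j ∈ Finset.range (N + 2),
        (Polynomial.C ((r : ℂ) ^ j / j) * Polynomial.X ^ j).eval ((r : ℝ) : ℂ))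
        = ((c : ℝ) : ℂ) := by
      rw [hcq]
      exact Finset.sum_congr rfl fun j _ => by simp
    rw [hsum]
    exact div_mul_cancel₀ β (by exact_mod_cast hc0.ne')
  · -- the estimate on the disc
    intro z hz
    rw [mem_ball, dist_eq_norm, sub_zero] at hz
    set e := ∑ j ∈ Finset.range (N + 2), ((r : ℂ) ^ j / j) * z ^ j with he
    have hev : (Polynomial.C (β / c) * q).eval z = (β / c) * e := by
      rw [Polynomial.eval_mul, Polynomial.eval_C, hq, Polynomial.eval_finset_sum, he]
      congr 1
      exact Finset.sum_congr rfl fun j _ => by simp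
    -- bounds on L
    set w := 1 - (r : ℂ) * z with hw
    set L := Complex.log w⁻¹ with hL
    have h_tail : ‖e - L‖ ≤ τ := aux_tail N hr0.le hr1 hz.le
    have hrz : ‖(r : ℂ) * z‖ ≤ r := by
      rw [norm_mul, Complex.norm_real, Real.norm_of_nonneg hr0.le]
      calc r * ‖z‖ ≤ r * 1 := by gcongr <;> exact hz.le
      _ = r := mul_one r
    have hwre : 1 - r ≤ w.re := by
      have h1 : w.re = 1 - r * z.re := by
        rw [hw]
        simp
      have h2 : z.re ≤ 1 := by
        have h := Complex.abs_re_le_norm z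
        have := (abs_le.mp h).2
        linarith only [this, hz]
      have h3 : r * z.re ≤ r * 1 := by gcongr
      rw [h1]; linarith only [h3]
    have hwre0 : 0 < w.re := by linarith
    have habs_lo : 1 - r ≤ ‖w‖ := by
      have := norm_sub_norm_le (1 : ℂ) ((r : ℂ) * z)
      rw [norm_one] at this
      rw [hw]; linarith only [this, hrz]
    have habs_hi : ‖w‖ ≤ 2 := by
      have := norm_sub_le (1 : ℂ) ((r : ℂ) * z)
      rw [norm_one] at this
      rw [hw]; linarith only [this, hrz, hr1]
    have habs_pos : 0 < ‖w‖ := by linarith only [habs_lo, h1r0]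
    have hLw : L = -Complex.log w := by
      rw [hL]
      refine Complex.log_inv w fun hargpi => ?_
      have h := Complex.arg_eq_pi_iff.mp hargpi
      linarith only [h.1, hwre0]
    have hLre_le : L.re ≤ M := by
      have h1 : Real.log (1 - r) ≤ Real.log ‖w‖ := by gcongr
      rw [h1r, Real.log_exp] at h1
      rw [hLw, Complex.neg_re, Complex.log_re]
      linarith only [h1]
    have hLre_ge : -1 ≤ L.re := by
      have h1 : Real.log ‖w‖ ≤ ‖w‖ - 1 := Real.log_le_sub_one_of_pos habs_pos
      rw [hLw, Complex.neg_re, Complex.log_re]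
      linarith only [h1, habs_hi]
    have hLim : |L.im| ≤ 2 := by
      rw [hLw, Complex.neg_im, Complex.log_im, abs_neg]
      have h1 : |Complex.arg w| ≤ Real.pi / 2 :=
        Complex.abs_arg_le_pi_div_two_iff.mpr hwre0.le
      have h2 := Real.pi_le_four
      linarith only [h1, h2]
    -- bounds on e
    have h_re : |(e - L).re| ≤ τ := by
      have h := Complex.abs_re_le_norm (e - L)
      linarith only [h, h_tail]
    have h_im : |(e - L).im| ≤ τ := by
      have h := Complex.abs_im_le_norm (e - L)
      linarith only [h, h_tail]
    rw [Complex.sub_re] at h_re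
    rw [Complex.sub_im] at h_im
    have h_re' := abs_le.mp h_re
    have h_im' := abs_le.mp h_im
    have hLim' := abs_le.mp hLim
    have he_re_hi : e.re ≤ M + 1 := by linarith only [h_re'.2, hLre_le, hτ1]
    have he_re_lo : -2 ≤ e.re := by linarith only [h_re'.1, hLre_ge, hτ1]
    have he_im : |e.im| ≤ 3 := by
      rw [abs_le]
      constructor
      · linarith only [h_im'.1, hLim'.1, hτ1]
      · linarith only [h_im'.2, hLim'.2, hτ1]
    -- the clamp point on the segment
    set t := max 0 (min 1 (e.re / c)) with ht
    have ht0 : 0 ≤ t := le_max_left _ _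
    have ht1 : t ≤ 1 := max_le (by norm_num) (min_le_left _ _)
    have hcM : M - 2 ≤ c := by linarith only [hcabs.1, hM₂ge, hτ1]
    have hkey : |e.re - c * t| ≤ 3 := by
      rcases le_or_gt e.re 0 with h | h
      · have hd : e.re / c ≤ 0 := div_nonpos_of_nonpos_of_nonneg h hc0.le
        have : t = 0 := by
          rw [ht, min_eq_right (by linarith), max_eq_left hd]
        rw [this, mul_zero, sub_zero, abs_of_nonpos h]
        linarith only [he_re_lo]
      · rcases le_or_gt e.re c with h2 | h2
        · have hd1 : e.re / c ≤ 1 := (div_le_one hc0).mpr h2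
          have hd0 : 0 ≤ e.re / c := by positivity
          have : t = e.re / c := by
            rw [ht, min_eq_right hd1, max_eq_right hd0]
          rw [this, mul_div_cancel₀ _ hc0.ne', sub_self, abs_zero]
          norm_num
        · have hd1 : (1:ℝ) ≤ e.re / c := (one_le_div hc0).mpr h2.le
          have : t = 1 := by
            rw [ht, min_eq_left hd1, max_eq_right (by norm_num)]
          rw [this, mul_one, abs_of_nonneg (by linarith only [h2])]
          linarith only [he_re_hi, hcM]
    have hnorm : ‖e - ((c * t : ℝ) : ℂ)‖ ≤ 6 := by
      have h1 := Complex.norm_le_abs_re_add_abs_im (e - ((c * t : ℝ) : ℂ))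
      have h2 : (e - ((c * t : ℝ) : ℂ)).re = e.re - c * t := by simp
      have h3 : (e - ((c * t : ℝ) : ℂ)).im = e.im := by simp
      rw [h2, h3] at h1
      linarith only [he_im, hkey, h1]
    -- conclude
    have hmem : (t : ℝ) • β ∈ segment ℝ (0 : ℂ) β := by
      rw [segment_eq_image]
      exact ⟨t, ⟨ht0, ht1⟩, by simp⟩
    have hcC : ((c : ℝ) : ℂ) ≠ 0 := by exact_mod_cast hc0.ne'
    have hfactor : (β / c) * e - (t : ℝ) • β = (β / c) * (e - ((c * t : ℝ) : ℂ)) := by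
      rw [Complex.real_smul]
      push_cast
      field_simp
    have h6c : 6 / c ≤ ε := by
      rw [div_le_iff₀ hc0]
      have h1 := mul_le_mul_of_nonneg_left hclo hε0.le
      rw [mul_div_cancel₀ _ hε0.ne'] at h1
      linarith only [h1, mul_comm ε c ▸ h1]
    calc Metric.infDist ((Polynomial.C (β / c) * q).eval z) (segment ℝ (0 : ℂ) β)
        ≤ dist ((Polynomial.C (β / c) * q).eval z) ((t : ℝ) • β) :=
          Metric.infDist_le_dist_of_mem hmem
      _ = ‖β‖ / c * ‖e - ((c * t : ℝ) : ℂ)‖ := by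
          rw [dist_eq_norm, hev, hfactor, norm_mul, norm_div, Complex.norm_real,
            Real.norm_of_nonneg hc0.le]
      _ ≤ ‖β‖ / c * 6 := by gcongr
      _ = ‖β‖ * (6 / c) := by ring
      _ ≤ ‖β‖ * ε := by gcongr
      _ < δ := by
          rw [hε, ← hB, mul_comm, div_mul_eq_mul_div,
            div_lt_iff₀ (by linarith only [hB0] : (0:ℝ) < B + 1)]
          exact (mul_lt_mul_iff_right₀ hδ0).mpr (lt_add_one B)
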